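/- Consider the finite program over atoms {p(a), q(a), r, b, c}: 'p(1) ← agg, b' where agg is the condition |{x ∈ {0,1} : p(x) ∈ S}| ≠ 1, together with the disjunctive fact 'b or c'. Under the A-log semantics — the reduct w.r.t. S deletes the first rule if |{x : p(x)∈S}| = 1 and otherwise replaces agg by the atoms {p(x) : p(x)∈S}; the disjunctive fact's reduct is itself; S is an answer set iff S is a minimal model of the reduct — the set {c} is an answer set, while {b, p(1)} is not an answer set (even though {b,p(1)} is a minimal set satisfying both rules when agg is evaluated directly in the set). -/
import Mathlib


inductive At | p0 | p1 | b | c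
deriving DecidableEq

open At

/-- The atoms p(0), p(1) indexed by terms 0,1. -/
def pat : Fin 2 → At := fun x => if x = 0 then p0 else p1

/-- The aggregate condition of the first rule: |{x : p(x) ∈ S}| ≠ 1. -/
def aggCond (S : Set At) : Prop := Set.ncard {x : Fin 2 | pat x ∈ S} ≠ 1

/-- M is a model of the reduct of the program w.r.t. S.  The disjunctive fact
`b or c` stays; the rule `p(1) ← agg, b` is deleted if |{x : p(x) ∈ S}| = 1 and
otherwise its aggregate is replaced by the atoms {p(x) : p(x) ∈ S}. -/
def ModelOfReduct (S M : Set At) : Prop :=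
  (b ∈ M ∨ c ∈ M) ∧
  (aggCond S → ((∀ x : Fin 2, pat x ∈ S → pat x ∈ M) ∧ b ∈ M) → p1 ∈ M)

/-- S is an answer set iff S is a minimal model of the reduct w.r.t. S. -/
def AnswerSet (S : Set At) : Prop :=
  ModelOfReduct S S ∧ ∀ M : Set At, ModelOfReduct S M → M ⊆ S → M = S

/-- Direct satisfaction of the two rules, evaluating the aggregate in the set
itself. -/
def DirSat (S : Set At) : Prop :=
  (b ∈ S ∨ c ∈ S) ∧ (aggCond S ∧ b ∈ S → p1 ∈ S)


lemma agg_c : aggCond {c} := by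
  have h : {x : Fin 2 | pat x ∈ ({c} : Set At)} = ∅ := by
    ext x; simp [pat]; split <;> simp
  rw [aggCond, h]; simp

lemma not_agg_bp1 : ¬ aggCond {b, p1} := by
  have h : {x : Fin 2 | pat x ∈ ({b, p1} : Set At)} = {1} := by
    ext x; fin_cases x <;> simp [pat]
  rw [aggCond, h]; simp

lemma agg_of_no_p (S : Set At) (h0 : p0 ∉ S) (h1 : p1 ∉ S) : aggCond S := by
  have h : {x : Fin 2 | pat x ∈ S} = ∅ := by
    ext x; fin_cases x <;> simp [pat, h0, h1]
  rw [aggCond, h]; simp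

theorem alog_flog_difference :
    AnswerSet {c} ∧
    ¬ AnswerSet {b, p1} ∧
    DirSat {b, p1} ∧
    (∀ M : Set At, M ⊆ {b, p1} → DirSat M → M = {b, p1}) := by
  refine ⟨⟨⟨Or.inr rfl, ?_⟩, ?_⟩, ?_, ⟨Or.inl (by simp), by simp⟩, ?_⟩
  · rintro _ ⟨_, hb⟩; simp at hb
  · intro M hM hsub
    rcases hM.1 with hb | hc
    · exact absurd (hsub hb) (by simp)
    · ext a; constructor
      · exact fun h => hsub h
      · rintro rfl; exact hc
  · rintro ⟨-, hmin⟩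
    have := hmin {b} ⟨Or.inl rfl, fun h => absurd h not_agg_bp1⟩ (by simp)
    have : p1 ∈ ({b} : Set At) := this ▸ (by simp : p1 ∈ ({b, p1} : Set At))
    simp at this
  · intro M hsub ⟨hbc, hrule⟩
    have hb : b ∈ M := by
      rcases hbc with h | h
      · exact h
      · have := hsub h; simp at this
    have hp1 : p1 ∈ M := by
      by_contra hp1
      have hp0 : p0 ∉ M := fun h => by have := hsub h; simp at this
      exact hp1 (hrule ⟨agg_of_no_p M hp0 hp1, hb⟩)
    ext a; constructor
    · exact fun h => hsub h
    · rintro (rfl | rfl) <;> assumption
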